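/- (Fine and Wilf) If a word w has periods p and q and |w| ≥ p + q - gcd(p, q), then w also has period gcd(p, q). -/
import Mathlib

/-- Chain steps of period `g`. -/
lemma fw_chain {α : Type*} (w : ℕ → α) (m g : ℕ)
    (hg : ∀ i, i + g < m → w i = w (i + g)) :
    ∀ c a, a + c * g < m → w a = w (a + c * g) := by
  intro c
  induction c with
  | zero => simp
  | succ c ih =>
    intro a ha
    have hmul : a + (c + 1) * g = a + c * g + g := by ring
    rw [hmul] at ha ⊢
    rw [ih a (by omega), hg (a + c * g) ha]

/-- If `w` has period `p` on `[0,n)`, period `g` on `[0,m)` with `g ∣ p`,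
`0 < g`, `0 < p`, `p ≤ m`, then `w` has period `g` on `[0,n)`. -/
lemma fw_extend {α : Type*} (w : ℕ → α) (n m p g : ℕ)
    (hg0 : 0 < g) (hp0 : 0 < p) (hdvd : g ∣ p) (hpm : p ≤ m)
    (hp : ∀ i, i + p < n → w i = w (i + p))
    (hgp : ∀ i, i + g < m → w i = w (i + g)) :
    ∀ i, i + g < n → w i = w (i + g) := by
  have hgle : g ≤ p := Nat.le_of_dvd hp0 hdvd
  intro i
  induction i using Nat.strong_induction_on with
  | _ i IH =>
    intro hi
    by_cases h1 : i + g < m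
    · exact hgp i h1
    · push_neg at h1
      by_cases h2 : p ≤ i
      · have e1 : w (i - p) = w i := by
          have := hp (i - p) (by omega)
          rwa [Nat.sub_add_cancel h2] at this
        have e2 : w (i - p + g) = w (i + g) := by
          have := hp (i - p + g) (by omega)
          rw [this]; congr 1; omega
        rw [← e1, ← e2]
        exact IH (i - p) (by omega) (by omega)
      · push_neg at h2
        have hpi : p ≤ i + g := by omega
        have e2 : w (i + g - p) = w (i + g) := by
          have := hp (i + g - p) (by omega)
          rwa [Nat.sub_add_cancel hpi] at this
        obtain ⟨c, hc⟩ : ∃ c, p - g = c * g := by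
          obtain ⟨c, hc⟩ := Nat.dvd_sub hdvd (dvd_refl g)
          exact ⟨c, by rw [hc, Nat.mul_comm]⟩
        have hchain := fw_chain w m g hgp c (i + g - p) (by omega)
        have heq : i + g - p + c * g = i := by omega
        rw [heq] at hchain
        rw [← e2, ← hchain]

/-- Fine–Wilf, assuming `0 < p ≤ q`, by induction on `p + q`. -/
lemma fw_aux {α : Type*} : ∀ k p q n (w : ℕ → α), p + q ≤ k → 0 < p → p ≤ q →
    (∀ i, i + p < n → w i = w (i + p)) →
    (∀ i, i + q < n → w i = w (i + q)) →
    p + q - Nat.gcd p q ≤ n →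
    ∀ i, i + Nat.gcd p q < n → w i = w (i + Nat.gcd p q) := by
  intro k
  induction k with
  | zero => intro p q n w hk hp0; omega
  | succ k ih =>
    intro p q n w hk hp0 hpq hp hq hlen
    by_cases hqp : q = p
    · subst hqp
      rw [Nat.gcd_self]
      exact hp
    · have hlt : p < q := lt_of_le_of_ne hpq (Ne.symm hqp)
      have hgdvd : Nat.gcd p q ∣ p := Nat.gcd_dvd_left p q
      have hgq : Nat.gcd p q ∣ q := Nat.gcd_dvd_right p q
      have hg0 : 0 < Nat.gcd p q := Nat.gcd_pos_of_pos_left q hp0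
      have hgle : Nat.gcd p q ≤ p := Nat.le_of_dvd hp0 hgdvd
      have hqpg : Nat.gcd p q ≤ q - p :=
        Nat.le_of_dvd (by omega) (Nat.dvd_sub hgq hgdvd)
      have hg : Nat.gcd p (q - p) = Nat.gcd p q := Nat.gcd_sub_self_right hpq
      have hn2p : 2 * p ≤ n := by omega
      -- prefix of length m = n - p has periods p and q - p
      have hqp' : ∀ i, i + (q - p) < n - p → w i = w (i + (q - p)) := by
        intro i hi
        have h1 : i + q < n := by omega
        have h2 := hp (i + (q - p)) (by omega)
        rw [hq i h1, h2]
        congr 1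
        omega
      have hpp' : ∀ i, i + p < n - p → w i = w (i + p) := fun i hi => hp i (by omega)
      have key : ∀ i, i + Nat.gcd p q < n - p → w i = w (i + Nat.gcd p q) := by
        rcases le_total p (q - p) with hle | hle
        · have := ih p (q - p) (n - p) w (by omega) hp0 hle hpp' hqp' (by rw [hg]; omega)
          rwa [hg] at this
        · have hg' : Nat.gcd (q - p) p = Nat.gcd p q := by rw [Nat.gcd_comm]; exact hg
          have := ih (q - p) p (n - p) w (by omega) (by omega) hle hqp' hpp'
            (by rw [hg']; omega)
          rwa [hg'] at this
      exact fw_extend w n (n - p) p (Nat.gcd p q) hg0 hp0 hgdvd (by omega) hp key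

/-- Fine and Wilf: if a word `w` of length `n` has periods `p` and `q` and
`n ≥ p + q - gcd(p,q)`, then `w` has period `gcd(p,q)`. -/
theorem stmt_1 {α : Type*} (w : ℕ → α) (n p q : ℕ)
    (hp : ∀ i, i + p < n → w i = w (i + p))
    (hq : ∀ i, i + q < n → w i = w (i + q))
    (hlen : p + q - Nat.gcd p q ≤ n) :
    ∀ i, i + Nat.gcd p q < n → w i = w (i + Nat.gcd p q) := by
  rcases Nat.eq_zero_or_pos p with hp0 | hp0
  · subst hp0
    rw [Nat.gcd_zero_left]
    exact hq
  rcases Nat.eq_zero_or_pos q with hq0 | hq0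
  · subst hq0
    rw [Nat.gcd_zero_right]
    exact hp
  rcases le_total p q with h | h
  · exact fw_aux (p + q) p q n w le_rfl hp0 h hp hq hlen
  · have := fw_aux (p + q) q p n w (by omega) hq0 h hq hp
      (by rw [Nat.gcd_comm]; omega)
    rw [Nat.gcd_comm p q]
    intro i hi
    exact this i hi
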